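/- For all density matrices ρ and σ of the same dimension, (1/2)‖ρ − σ‖₁ ≤ √(1 − tr(ρσ)). -/

import Mathlib

open Matrix Kronecker BigOperators
open scoped ComplexOrder

noncomputable section

/-- The positive semidefinite square root (as defined in the older Mathlib). -/
def Matrix.PosSemidef.sqrt {n : Type*} [Fintype n] [DecidableEq n] {𝕜 : Type*} [RCLike 𝕜]
    {A : Matrix n n 𝕜} (hA : A.PosSemidef) : Matrix n n 𝕜 :=
  hA.1.eigenvectorUnitary.1 * diagonal ((↑) ∘ (fun x => Real.sqrt x) ∘ hA.1.eigenvalues) *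
    (star hA.1.eigenvectorUnitary : Matrix n n 𝕜)

/-- The trace norm (sum of singular values) of a complex matrix: `tr √(AᴴA)`. -/
def traceNorm {m n : Type*} [Fintype m] [Fintype n] [DecidableEq n] (A : Matrix m n ℂ) : ℝ :=
  ((Matrix.posSemidef_conjTranspose_mul_self A).sqrt).trace.re

/-- A density matrix: positive semidefinite with trace one. -/
def IsDensity {n : Type*} [Fintype n] [DecidableEq n] (ρ : Matrix n n ℂ) : Prop :=
  ρ.PosSemidef ∧ ρ.trace = 1

/-- Trace norm contraction coefficient of a map on matrices. -/
def etaTr {dA dB : ℕ} (Φ : Matrix (Fin dA) (Fin dA) ℂ → Matrix (Fin dB) (Fin dB) ℂ) : ℝ :=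
  sSup {r : ℝ | ∃ ρ σ : Matrix (Fin dA) (Fin dA) ℂ, IsDensity ρ ∧ IsDensity σ ∧ ρ ≠ σ ∧
    r = traceNorm (Φ ρ - Φ σ) / traceNorm (ρ - σ)}

/-- Optimal success probability for transmitting one of `k` messages through `Φ`. -/
def Psucc {dA dB : ℕ} (Φ : Matrix (Fin dA) (Fin dA) ℂ → Matrix (Fin dB) (Fin dB) ℂ)
    (k : ℕ) : ℝ :=
  sSup {r : ℝ | ∃ (M : Fin k → Matrix (Fin dB) (Fin dB) ℂ)
      (ρ : Fin k → Matrix (Fin dA) (Fin dA) ℂ),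
    (∀ i, (M i).PosSemidef) ∧ (∑ i, M i = 1) ∧ (∀ i, IsDensity (ρ i)) ∧
    r = (1 / (k : ℝ)) * ∑ i, ((M i * Φ (ρ i)).trace).re}

/-- The Euclidean (ℓ₂) norm of a complex vector. -/
def l2norm {n : Type*} [Fintype n] (v : n → ℂ) : ℝ :=
  Real.sqrt (∑ i, ‖v i‖ ^ 2)

/-- Choi state of a map on matrices: `(1/dA) ∑ᵢⱼ Eᵢⱼ ⊗ Φ(Eᵢⱼ)`. -/
def choi {dA dB : ℕ} (Φ : Matrix (Fin dA) (Fin dA) ℂ → Matrix (Fin dB) (Fin dB) ℂ) :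
    Matrix (Fin dA × Fin dB) (Fin dA × Fin dB) ℂ :=
  (dA : ℂ)⁻¹ • ∑ i : Fin dA, ∑ j : Fin dA,
    (Matrix.single i j (1 : ℂ)) ⊗ₖ (Φ (Matrix.single i j (1 : ℂ)))

section SqrtPort
open scoped MatrixOrder

theorem Matrix.PosSemidef.sqrt_eq_cfcSqrt {n : Type*} [Fintype n] [DecidableEq n] {𝕜 : Type*}
    [RCLike 𝕜] {A : Matrix n n 𝕜} (hA : A.PosSemidef) : hA.sqrt = CFC.sqrt A := by
  rw [CFC.sqrt_eq_cfc, cfc_nnreal_eq_real _ A hA.nonneg, hA.1.cfc_eq]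
  simp only [IsHermitian.cfc, Matrix.PosSemidef.sqrt, Unitary.conjStarAlgAut_apply]
  congr 3
  funext i
  simp [Real.coe_toNNReal _ (hA.eigenvalues_nonneg i), max_eq_left (hA.eigenvalues_nonneg i)]

theorem Matrix.PosSemidef.posSemidef_sqrt {n : Type*} [Fintype n] [DecidableEq n] {𝕜 : Type*}
    [RCLike 𝕜] {A : Matrix n n 𝕜} (hA : A.PosSemidef) : hA.sqrt.PosSemidef := by
  rw [hA.sqrt_eq_cfcSqrt]; exact (CFC.sqrt_nonneg A).posSemidef

theorem Matrix.PosSemidef.sqrt_mul_self {n : Type*} [Fintype n] [DecidableEq n] {𝕜 : Type*}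
    [RCLike 𝕜] {A : Matrix n n 𝕜} (hA : A.PosSemidef) : hA.sqrt * hA.sqrt = A := by
  rw [hA.sqrt_eq_cfcSqrt]; exact CFC.sqrt_mul_sqrt_self A hA.nonneg

theorem Matrix.PosSemidef.eq_sqrt_of_sq_eq {n : Type*} [Fintype n] [DecidableEq n] {𝕜 : Type*}
    [RCLike 𝕜] {A : Matrix n n 𝕜} (hA : A.PosSemidef) {B : Matrix n n 𝕜} (hB : B.PosSemidef)
    (hAB : A ^ 2 = B) : A = hB.sqrt := by
  rw [hB.sqrt_eq_cfcSqrt]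
  exact ((CFC.sqrt_eq_iff B A hB.nonneg hA.nonneg).mpr (by rw [← sq]; exact hAB)).symm

end SqrtPort

namespace FvG

variable {n : ℕ}

abbrev Mat (n : ℕ) := Matrix (Fin n) (Fin n) ℂ

lemma star_coe_unitary (U : Matrix.unitaryGroup (Fin n) ℂ) :
    (star U : Mat n) = (U : Mat n)ᴴ := rfl

lemma unit_cancel_left (U : Matrix.unitaryGroup (Fin n) ℂ) (X : Mat n) :
    (U : Mat n)ᴴ * ((U : Mat n) * X) = X := by
  rw [← mul_assoc, ← star_coe_unitary, ((Matrix.mem_unitaryGroup_iff').mp U.2 : _), one_mul]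

lemma unit_cancel_left' (U : Matrix.unitaryGroup (Fin n) ℂ) (X : Mat n) :
    (U : Mat n) * ((U : Mat n)ᴴ * X) = X := by
  rw [← mul_assoc, ← star_coe_unitary, ((Matrix.mem_unitaryGroup_iff).mp U.2 : _), one_mul]

/-- trace of a unitary conjugation -/
lemma trace_unitary_conj (U : Matrix.unitaryGroup (Fin n) ℂ) (d : Mat n) :
    ((U : Mat n) * d * (U : Mat n)ᴴ).trace = d.trace := by
  rw [Matrix.trace_mul_cycle, ← star_coe_unitary, ((Matrix.mem_unitaryGroup_iff').mp U.2 : _),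
    one_mul]

/-- For Hermitian `A`, the trace norm is the sum of the absolute values of eigenvalues. -/
lemma traceNorm_hermitian {A : Mat n} (hA : A.IsHermitian) :
    traceNorm A = ∑ i, |hA.eigenvalues i| := by
  classical
  set U := hA.eigenvectorUnitary with hU
  set d : Mat n := Matrix.diagonal (fun i => ((|hA.eigenvalues i| : ℝ) : ℂ)) with hd
  set D : Mat n := Matrix.diagonal (RCLike.ofReal ∘ hA.eigenvalues) with hD
  have hspec : A = (U : Mat n) * D * (U : Mat n)ᴴ := by
    simpa [star_coe_unitary, hD, hU] using hA.spectral_theorem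
  have hS : (((U : Mat n) * d * (U : Mat n)ᴴ)).PosSemidef := by
    apply Matrix.PosSemidef.mul_mul_conjTranspose_same
    refine Matrix.posSemidef_diagonal_iff.mpr fun i => ?_
    exact_mod_cast Complex.zero_le_real.mpr (abs_nonneg _)
  have hsq : ((U : Mat n) * d * (U : Mat n)ᴴ) ^ 2 = Aᴴ * A := by
    have hdd : d * d = D * D := by
      rw [hd, hD, Matrix.diagonal_mul_diagonal, Matrix.diagonal_mul_diagonal]
      apply congrArg Matrix.diagonal; funext i
      simp only [Function.comp_apply]
      rw [← RCLike.ofReal_mul, ← abs_mul_abs_self (hA.eigenvalues i), RCLike.ofReal_mul]; rfl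
    have hdd' : ∀ X : Mat n, d * (d * X) = D * (D * X) := fun X => by
      rw [← mul_assoc, ← mul_assoc, hdd]
    rw [hA.eq, pow_two, hspec]
    simp only [mul_assoc, unit_cancel_left]
    rw [hdd']
  have hsqrt := hS.eq_sqrt_of_sq_eq (Matrix.posSemidef_conjTranspose_mul_self A) hsq
  rw [traceNorm, ← hsqrt, trace_unitary_conj, hd, Matrix.trace_diagonal, Complex.re_sum]
  simp

lemma psd_diag_re_nonneg {M : Mat n} (hM : M.PosSemidef) (i : Fin n) : 0 ≤ (M i i).re := by
  have h := hM.dotProduct_mulVec_nonneg (Pi.single i 1)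
  have he : dotProduct (star (Pi.single i 1)) (M *ᵥ Pi.single i 1) = M i i := by
    simp [dotProduct, Matrix.mulVec, Pi.single_apply, Finset.sum_ite_eq,
      dotProduct]
  rw [he] at h
  exact (Complex.le_def.mp h).1

lemma psd_trace_re_nonneg {M : Mat n} (hM : M.PosSemidef) : 0 ≤ M.trace.re := by
  rw [Matrix.trace, Complex.re_sum]
  exact Finset.sum_nonneg fun i _ => psd_diag_re_nonneg hM i

lemma trace_mul_hermitian_le {A P : Mat n} (hA : A.IsHermitian) (hP : P.PosSemidef)
    (hP1 : (1 - P).PosSemidef) :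
    (P * A).trace.re ≤ ∑ i, max (hA.eigenvalues i) 0 := by
  classical
  set U := hA.eigenvectorUnitary with hU
  set D : Mat n := Matrix.diagonal (RCLike.ofReal ∘ hA.eigenvalues) with hD
  have hspec : A = (U : Mat n) * D * (U : Mat n)ᴴ := by
    simpa [star_coe_unitary, hD, hU] using hA.spectral_theorem
  set M : Mat n := (U : Mat n)ᴴ * P * (U : Mat n) with hM
  have hMpsd : M.PosSemidef := hP.conjTranspose_mul_mul_same _
  have hUU : (U : Mat n)ᴴ * (U : Mat n) = 1 := by
    rw [← star_coe_unitary]; exact (Matrix.mem_unitaryGroup_iff').mp U.2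
  have h1M : (1 - M).PosSemidef := by
    have h := hP1.conjTranspose_mul_mul_same (B := (U : Mat n))
    have : (U : Mat n)ᴴ * (1 - P) * (U : Mat n) = 1 - M := by
      rw [Matrix.mul_sub, Matrix.sub_mul, Matrix.mul_one, hUU, hM]
    rwa [this] at h
  have htr : (P * A).trace = (M * D).trace := by
    rw [hspec, hM]
    rw [show P * ((U : Mat n) * D * (U : Mat n)ᴴ) = (P * (U : Mat n) * D) * (U : Mat n)ᴴ by
      simp only [Matrix.mul_assoc]]
    rw [Matrix.trace_mul_comm]
    simp only [Matrix.mul_assoc]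
  have htr2 : (M * D).trace = ∑ i, M i i * ((hA.eigenvalues i : ℝ) : ℂ) := by
    simp [Matrix.trace, Matrix.diag, hD, Matrix.mul_diagonal, Function.comp]
  rw [htr, htr2, Complex.re_sum]
  have hre : ∀ i, (M i i * ((hA.eigenvalues i : ℝ) : ℂ)).re = (M i i).re * hA.eigenvalues i := by
    intro i; simp [Complex.mul_re]
  refine Finset.sum_le_sum fun i _ => ?_
  rw [hre i]
  have h0 : 0 ≤ (M i i).re := psd_diag_re_nonneg hMpsd i
  have h1 : (M i i).re ≤ 1 := by
    have := psd_diag_re_nonneg h1M i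
    simp only [Matrix.sub_apply, Matrix.one_apply_eq, Complex.sub_re, Complex.one_re] at this
    linarith
  rcases le_or_gt 0 (hA.eigenvalues i) with hl | hl
  · calc (M i i).re * hA.eigenvalues i ≤ 1 * hA.eigenvalues i := by nlinarith
      _ = hA.eigenvalues i := one_mul _
      _ ≤ max (hA.eigenvalues i) 0 := le_max_left _ _
  · calc (M i i).re * hA.eigenvalues i ≤ 0 := by nlinarith
      _ ≤ max (hA.eigenvalues i) 0 := le_max_right _ _

/-- The positive spectral projector. -/
lemma exists_pos_projector {A : Mat n} (hA : A.IsHermitian) :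
    ∃ P : Mat n, P.PosSemidef ∧ (1 - P).PosSemidef ∧ P * P = P ∧ Pᴴ = P ∧
      (P * A).trace.re = ∑ i, max (hA.eigenvalues i) 0 := by
  classical
  set U := hA.eigenvectorUnitary with hU
  set D : Mat n := Matrix.diagonal (RCLike.ofReal ∘ hA.eigenvalues) with hD
  have hspec : A = (U : Mat n) * D * (U : Mat n)ᴴ := by
    simpa [star_coe_unitary, hD, hU] using hA.spectral_theorem
  have hUU : (U : Mat n)ᴴ * (U : Mat n) = 1 := by
    rw [← star_coe_unitary]; exact (Matrix.mem_unitaryGroup_iff').mp U.2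
  have hUU' : (U : Mat n) * (U : Mat n)ᴴ = 1 := by
    rw [← star_coe_unitary]; exact (Matrix.mem_unitaryGroup_iff).mp U.2
  set e : Fin n → ℂ := fun i => if 0 ≤ hA.eigenvalues i then 1 else 0 with he
  set P : Mat n := (U : Mat n) * Matrix.diagonal e * (U : Mat n)ᴴ with hPdef
  have hepsd : (Matrix.diagonal e).PosSemidef := by
    refine Matrix.posSemidef_diagonal_iff.mpr fun i => ?_
    by_cases h : 0 ≤ hA.eigenvalues i <;> simp [he, h]
  refine ⟨P, ?_, ?_, ?_, ?_, ?_⟩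
  · exact hepsd.mul_mul_conjTranspose_same _
  · have h1P : (1 : Mat n) - P = (U : Mat n) * Matrix.diagonal (fun i => 1 - e i) * (U : Mat n)ᴴ := by
      have : Matrix.diagonal (fun i => 1 - e i) = 1 - Matrix.diagonal e := by
        rw [← Matrix.diagonal_one, ← Matrix.diagonal_sub]
      rw [this, Matrix.mul_sub, Matrix.sub_mul, Matrix.mul_one, hUU', hPdef]
    rw [h1P]
    apply Matrix.PosSemidef.mul_mul_conjTranspose_same
    refine Matrix.posSemidef_diagonal_iff.mpr fun i => ?_
    by_cases h : 0 ≤ hA.eigenvalues i <;> simp [he, h]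
  · have hee : Matrix.diagonal e * Matrix.diagonal e = Matrix.diagonal e := by
      rw [Matrix.diagonal_mul_diagonal]
      apply congrArg Matrix.diagonal; funext i
      by_cases h : 0 ≤ hA.eigenvalues i <;> simp [he, h]
    rw [hPdef]
    simp only [Matrix.mul_assoc]
    rw [show (U : Mat n)ᴴ * ((U : Mat n) * (Matrix.diagonal e * (U : Mat n)ᴴ)) =
        Matrix.diagonal e * (U : Mat n)ᴴ from unit_cancel_left U _]
    rw [← Matrix.mul_assoc (Matrix.diagonal e), hee]
  · rw [hPdef]
    simp only [Matrix.conjTranspose_mul, Matrix.conjTranspose_conjTranspose,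
      Matrix.diagonal_conjTranspose]
    have : star e = e := by
      funext i; by_cases h : 0 ≤ hA.eigenvalues i <;> simp [he, h, Pi.star_apply]
    rw [this, Matrix.mul_assoc]
  · have htr : (P * A).trace = (Matrix.diagonal e * D).trace := by
      rw [hspec, hPdef]
      rw [show (U : Mat n) * Matrix.diagonal e * (U : Mat n)ᴴ *
            ((U : Mat n) * D * (U : Mat n)ᴴ) =
          (U : Mat n) * (Matrix.diagonal e * ((U : Mat n)ᴴ * ((U : Mat n) * (D * (U : Mat n)ᴴ)))) by
        simp only [Matrix.mul_assoc]]
      rw [unit_cancel_left U]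
      rw [show (U : Mat n) * (Matrix.diagonal e * (D * (U : Mat n)ᴴ)) =
          (U : Mat n) * (Matrix.diagonal e * D) * (U : Mat n)ᴴ by simp only [Matrix.mul_assoc]]
      rw [trace_unitary_conj]
    rw [htr, Matrix.diagonal_mul_diagonal, Matrix.trace_diagonal, Complex.re_sum]
    refine Finset.sum_congr rfl fun i _ => ?_
    by_cases h : 0 ≤ hA.eigenvalues i
    · simp [he, h, max_eq_left h, Function.comp]
    · simp [he, h, max_eq_right (le_of_lt (lt_of_not_ge h)), Function.comp]


lemma trace_conjTranspose_mul (M N : Mat n) :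
    (Mᴴ * N).trace = ∑ j, ∑ i, (starRingEnd ℂ) (M i j) * N i j := by
  simp [Matrix.trace, Matrix.diag, Matrix.mul_apply, Matrix.conjTranspose_apply]

lemma trace_conjTranspose_mul_self_re (M : Mat n) :
    (Mᴴ * M).trace.re = ∑ j, ∑ i, ‖M i j‖ ^ 2 := by
  rw [trace_conjTranspose_mul]
  rw [Complex.re_sum]
  congr 1; ext j
  rw [Complex.re_sum]
  congr 1; ext i
  rw [← Complex.normSq_eq_conj_mul_self]
  simp [Complex.sq_norm]

lemma trace_CS (M N : Mat n) :
    (Mᴴ * N).trace.re ≤ Real.sqrt (Mᴴ * M).trace.re * Real.sqrt (Nᴴ * N).trace.re := by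
  have h1 : (Mᴴ * N).trace.re ≤ ∑ j, ∑ i, ‖M i j‖ * ‖N i j‖ := by
    rw [trace_conjTranspose_mul]
    calc (∑ j, ∑ i, (starRingEnd ℂ) (M i j) * N i j).re
        ≤ ‖∑ j, ∑ i, (starRingEnd ℂ) (M i j) * N i j‖ := Complex.re_le_norm _
      _ ≤ ∑ j, ∑ i, ‖(starRingEnd ℂ) (M i j) * N i j‖ := by
          refine (norm_sum_le _ _).trans (Finset.sum_le_sum fun j _ => norm_sum_le _ _)
      _ = ∑ j, ∑ i, ‖M i j‖ * ‖N i j‖ := by simp [norm_mul]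
  refine h1.trans ?_
  have h2 : (∑ j, ∑ i, ‖M i j‖ * ‖N i j‖) ^ 2 ≤
      (∑ j, ∑ i, ‖M i j‖ ^ 2) * (∑ j, ∑ i, ‖N i j‖ ^ 2) := by
    simpa [← Finset.sum_product', Finset.sum_product] using
      Finset.sum_mul_sq_le_sq_mul_sq Finset.univ
        (fun p : Fin n × Fin n => ‖M p.2 p.1‖) (fun p => ‖N p.2 p.1‖)
  rw [trace_conjTranspose_mul_self_re, trace_conjTranspose_mul_self_re]
  have hnn : (0:ℝ) ≤ ∑ j, ∑ i, ‖M i j‖ * ‖N i j‖ :=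
    Finset.sum_nonneg fun j _ => Finset.sum_nonneg fun i _ => by positivity
  calc (∑ j, ∑ i, ‖M i j‖ * ‖N i j‖)
      = Real.sqrt ((∑ j, ∑ i, ‖M i j‖ * ‖N i j‖)^2) := (Real.sqrt_sq hnn).symm
    _ ≤ Real.sqrt ((∑ j, ∑ i, ‖M i j‖ ^ 2) * (∑ j, ∑ i, ‖N i j‖ ^ 2)) := Real.sqrt_le_sqrt h2
    _ = _ := Real.sqrt_mul (by positivity) _

lemma trace_eq_sum_eigenvalues {A : Mat n} (hA : A.IsHermitian) :
    A.trace = ∑ i, ((hA.eigenvalues i : ℝ) : ℂ) := by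
  conv_lhs => rw [hA.spectral_theorem, Unitary.conjStarAlgAut_apply]
  rw [show (star (hA.eigenvectorUnitary : Mat n)) = (hA.eigenvectorUnitary : Mat n)ᴴ from rfl,
    trace_unitary_conj, Matrix.trace_diagonal]
  rfl

lemma psd_trace_sq_le {R : Mat n} (hR : R.PosSemidef) :
    (R * R).trace.re ≤ (R.trace.re) ^ 2 := by
  classical
  set U := hR.1.eigenvectorUnitary with hU
  set D : Mat n := Matrix.diagonal (RCLike.ofReal ∘ hR.1.eigenvalues) with hD
  have hspec : R = (U : Mat n) * D * (U : Mat n)ᴴ := by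
    simpa [star_coe_unitary, hD, hU] using hR.1.spectral_theorem
  have hRR : R * R = (U : Mat n) * (D * D) * (U : Mat n)ᴴ := by
    rw [hspec]
    simp only [Matrix.mul_assoc, unit_cancel_left]
  have htr1 : R.trace.re = ∑ i, hR.1.eigenvalues i := by
    rw [trace_eq_sum_eigenvalues hR.1, Complex.re_sum]; simp
  have htr2 : (R * R).trace.re = ∑ i, (hR.1.eigenvalues i) ^ 2 := by
    rw [hRR, trace_unitary_conj, hD, Matrix.diagonal_mul_diagonal, Matrix.trace_diagonal,
      Complex.re_sum]
    refine Finset.sum_congr rfl fun i _ => ?_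
    simp [Function.comp, ← Complex.ofReal_mul, sq]
  rw [htr1, htr2]
  have hnn : ∀ i, 0 ≤ hR.1.eigenvalues i := hR.eigenvalues_nonneg
  have hle : ∀ i : Fin n, (hR.1.eigenvalues i) ^ 2 ≤
      hR.1.eigenvalues i * ∑ j, hR.1.eigenvalues j := by
    intro i
    have : hR.1.eigenvalues i ≤ ∑ j, hR.1.eigenvalues j :=
      Finset.single_le_sum (fun j _ => hnn j) (Finset.mem_univ i)
    nlinarith [hnn i]
  calc (∑ i, (hR.1.eigenvalues i) ^ 2)
      ≤ ∑ i, hR.1.eigenvalues i * ∑ j, hR.1.eigenvalues j :=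
        Finset.sum_le_sum fun i _ => hle i
    _ = (∑ i, hR.1.eigenvalues i) ^ 2 := by rw [← Finset.sum_mul, sq]

lemma psd_mul_trace_re_nonneg {P Q : Mat n} (hP : P.PosSemidef) (hQ : Q.PosSemidef) :
    0 ≤ (P * Q).trace.re := by
  have hs := hP.posSemidef_sqrt
  have hmul : P * Q = hP.sqrt * (hP.sqrt * Q) := by
    rw [← Matrix.mul_assoc, hP.sqrt_mul_self]
  have : (P * Q).trace = (hP.sqrt * Q * hP.sqrt).trace := by
    rw [hmul, Matrix.trace_mul_comm, Matrix.mul_assoc]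
  rw [this]
  have hpsd : (hP.sqrt * Q * hP.sqrt).PosSemidef := by
    have := hQ.mul_mul_conjTranspose_same hP.sqrt
    rwa [hs.1.eq] at this
  exact psd_trace_re_nonneg hpsd

lemma key_split {Y W P : Mat n} (hPh : Pᴴ = P) (hP2 : P * P = P) :
    (Y * W * P).trace.re ≤
      Real.sqrt ((P * (Y * Yᴴ)).trace.re) * Real.sqrt ((P * (Wᴴ * W)).trace.re) := by
  have h1 : ((Yᴴ * P)ᴴ * (W * P)).trace = (Y * W * P).trace := by
    rw [Matrix.conjTranspose_mul, Matrix.conjTranspose_conjTranspose, hPh,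
      show P * Y * (W * P) = ((P * (Y * W)) * P) by simp only [Matrix.mul_assoc],
      Matrix.trace_mul_comm,
      show P * (P * (Y * W)) = (P * P) * (Y * W) by simp only [Matrix.mul_assoc], hP2,
      Matrix.trace_mul_comm]
  have h2 : ((Yᴴ * P)ᴴ * (Yᴴ * P)).trace = (P * (Y * Yᴴ)).trace := by
    rw [Matrix.conjTranspose_mul, Matrix.conjTranspose_conjTranspose, hPh,
      show P * Y * (Yᴴ * P) = (P * Y) * Yᴴ * P by simp only [Matrix.mul_assoc],
      Matrix.trace_mul_cycle,
      show P * (P * Y) * Yᴴ = (P * P) * (Y * Yᴴ) by simp only [Matrix.mul_assoc], hP2]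
  have h3 : ((W * P)ᴴ * (W * P)).trace = (P * (Wᴴ * W)).trace := by
    rw [Matrix.conjTranspose_mul, hPh,
      show P * Wᴴ * (W * P) = ((P * Wᴴ) * W) * P by simp only [Matrix.mul_assoc],
      Matrix.trace_mul_comm,
      show P * (P * Wᴴ * W) = (P * P) * (Wᴴ * W) by simp only [Matrix.mul_assoc], hP2]
  have h := trace_CS (Yᴴ * P) (W * P)
  rw [h1, h2, h3] at h
  exact h

lemma fidelity_ineq {ρ σ P : Mat n} (hρ : ρ.PosDef) (hσ : σ.PosSemidef)
    (hPh : Pᴴ = P) (hP2 : P * P = P) :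
    Real.sqrt ((ρ * σ).trace.re) ≤
      Real.sqrt ((P * σ).trace.re) * Real.sqrt ((P * ρ).trace.re) +
      Real.sqrt (((1 - P) * σ).trace.re) * Real.sqrt (((1 - P) * ρ).trace.re) := by
  have hPSD := hρ.posSemidef
  set W := hPSD.sqrt with hWdef
  have hW2 : W * W = ρ := hPSD.sqrt_mul_self
  have hWh : Wᴴ = W := hPSD.posSemidef_sqrt.1
  have hdet : W.det * W.det = ρ.det := by rw [← Matrix.det_mul, hW2]
  have hWdet : W.det ≠ 0 := by
    intro h
    have : ρ.det = 0 := by rw [← hdet, h, mul_zero]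
    exact hρ.det_pos.ne' this
  have hWunit : IsUnit W.det := Ne.isUnit hWdet
  have hWiW : W⁻¹ * W = 1 := Matrix.nonsing_inv_mul _ hWunit
  have hWWi : W * W⁻¹ = 1 := Matrix.mul_nonsing_inv _ hWunit
  have hTpsd : (W * σ * W).PosSemidef := by
    have := hσ.mul_mul_conjTranspose_same W
    rwa [hWh] at this
  set R := hTpsd.sqrt with hRdef
  have hR2 : R * R = W * σ * W := hTpsd.sqrt_mul_self
  have hRpsd : R.PosSemidef := hTpsd.posSemidef_sqrt
  have hRh : Rᴴ = R := hRpsd.1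
  set Y := W⁻¹ * R with hY
  have hYYt : Y * Yᴴ = σ := by
    rw [hY, Matrix.conjTranspose_mul, hRh, Matrix.conjTranspose_nonsing_inv, hWh,
      show W⁻¹ * R * (R * W⁻¹) = W⁻¹ * ((R * R) * W⁻¹) by simp only [Matrix.mul_assoc], hR2,
      show W⁻¹ * (W * σ * W * W⁻¹) = (W⁻¹ * W) * (σ * (W * W⁻¹)) by simp only [Matrix.mul_assoc],
      hWiW, hWWi, one_mul, mul_one]
  have htrYW : (Y * W).trace = R.trace := by
    rw [hY, Matrix.mul_assoc, Matrix.trace_mul_comm, Matrix.mul_assoc, hWWi, mul_one]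
  have hRtrace : (ρ * σ).trace.re ≤ (R.trace.re) ^ 2 := by
    have h1 : (R * R).trace = (ρ * σ).trace := by
      rw [hR2, Matrix.trace_mul_cycle, hW2]
    calc (ρ * σ).trace.re = (R * R).trace.re := by rw [h1]
      _ ≤ _ := psd_trace_sq_le hRpsd
  have hRnn : 0 ≤ R.trace.re := psd_trace_re_nonneg hRpsd
  have hsqrt1 : Real.sqrt ((ρ * σ).trace.re) ≤ R.trace.re := by
    calc Real.sqrt ((ρ * σ).trace.re) ≤ Real.sqrt ((R.trace.re) ^ 2) :=
          Real.sqrt_le_sqrt hRtrace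
      _ = R.trace.re := Real.sqrt_sq hRnn
  have hsplit : R.trace.re = (Y * W * P).trace.re + (Y * W * (1 - P)).trace.re := by
    have hsum : (Y * W * P) + (Y * W * (1 - P)) = Y * W := by
      rw [← Matrix.mul_add]; simp
    calc R.trace.re = (Y * W).trace.re := by rw [htrYW]
      _ = ((Y * W * P) + (Y * W * (1 - P))).trace.re := by rw [hsum]
      _ = _ := by rw [Matrix.trace_add, Complex.add_re]
  have h1Ph : (1 - P)ᴴ = 1 - P := by
    rw [Matrix.conjTranspose_sub, Matrix.conjTranspose_one, hPh]
  have h1P2 : (1 - P) * (1 - P) = 1 - P := by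
    rw [Matrix.sub_mul, one_mul, Matrix.mul_sub, mul_one, hP2, sub_self, sub_zero]
  have hb1 := key_split (Y := Y) (W := W) hPh hP2
  rw [hYYt, hWh, hW2] at hb1
  have hb2 := key_split (Y := Y) (W := W) h1Ph h1P2
  rw [hYYt, hWh, hW2] at hb2
  calc Real.sqrt ((ρ * σ).trace.re) ≤ R.trace.re := hsqrt1
    _ = (Y * W * P).trace.re + (Y * W * (1 - P)).trace.re := hsplit
    _ ≤ _ := add_le_add hb1 hb2

lemma classical_step {a b t : ℝ} (ha0 : 0 ≤ a) (ha1 : a ≤ 1) (hb0 : 0 ≤ b) (hb1 : b ≤ 1)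
    (ht0 : 0 ≤ t)
    (h : Real.sqrt t ≤ Real.sqrt a * Real.sqrt b + Real.sqrt (1-a) * Real.sqrt (1-b)) :
    t ≤ 1 - (a - b)^2 := by
  set sa := Real.sqrt a
  set sb := Real.sqrt b
  set sc := Real.sqrt (1-a)
  set sd := Real.sqrt (1-b)
  have hsa : sa^2 = a := Real.sq_sqrt ha0
  have hsb : sb^2 = b := Real.sq_sqrt hb0
  have hsc : sc^2 = 1-a := Real.sq_sqrt (by linarith)
  have hsd : sd^2 = 1-b := Real.sq_sqrt (by linarith)
  have h1 : t ≤ (sa*sb + sc*sd)^2 := by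
    calc t = (Real.sqrt t)^2 := (Real.sq_sqrt ht0).symm
      _ ≤ (sa*sb + sc*sd)^2 := by
          apply pow_le_pow_left₀ (Real.sqrt_nonneg _) h
  nlinarith [sq_nonneg (sa*sc - sb*sd), Real.sqrt_nonneg a, Real.sqrt_nonneg b,
    Real.sqrt_nonneg (1-a), Real.sqrt_nonneg (1-b)]

lemma density_bounds {ρ P : Mat n} (hρ : ρ.PosSemidef) (hρ1 : ρ.trace = 1)
    (hPp : P.PosSemidef) (hP1 : (1 - P).PosSemidef) :
    0 ≤ (P * ρ).trace.re ∧ (P * ρ).trace.re ≤ 1 := by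
  refine ⟨psd_mul_trace_re_nonneg hPp hρ, ?_⟩
  have h := psd_mul_trace_re_nonneg hP1 hρ
  have e : ((1 - P) * ρ).trace = 1 - (P * ρ).trace := by
    rw [Matrix.sub_mul, one_mul, Matrix.trace_sub, hρ1]
  rw [e] at h
  simp only [Complex.sub_re, Complex.one_re] at h
  linarith

lemma sum_eigen_zero {H : Mat n} (hH : H.IsHermitian) (h0 : H.trace = 0) :
    ∑ i, hH.eigenvalues i = 0 := by
  have h := trace_eq_sum_eigenvalues hH
  rw [h0] at h
  have h2 := congrArg Complex.re h.symm
  rw [Complex.re_sum] at h2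
  simpa using h2

lemma half_traceNorm_eq {H : Mat n} (hH : H.IsHermitian) (h0 : H.trace = 0) :
    (1/2) * traceNorm H = ∑ i, max (hH.eigenvalues i) 0 := by
  rw [traceNorm_hermitian hH]
  have hz := sum_eigen_zero hH h0
  have habs : ∀ i : Fin n, |hH.eigenvalues i| =
      2 * max (hH.eigenvalues i) 0 - hH.eigenvalues i := by
    intro i; rcases le_or_gt 0 (hH.eigenvalues i) with h | h
    · rw [max_eq_left h, abs_of_nonneg h]; ring
    · rw [max_eq_right h.le, abs_of_neg h]; ring
  rw [Finset.sum_congr rfl (fun i _ => habs i), Finset.sum_sub_distrib, hz, sub_zero,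
    ← Finset.mul_sum]
  ring

lemma traceNorm_nonneg_herm {H : Mat n} (hH : H.IsHermitian) : 0 ≤ traceNorm H := by
  rw [traceNorm_hermitian hH]
  exact Finset.sum_nonneg fun i _ => abs_nonneg _

lemma trace_mul_le_half_traceNorm {H P : Mat n} (hH : H.IsHermitian) (h0 : H.trace = 0)
    (hPp : P.PosSemidef) (hP1 : (1 - P).PosSemidef) :
    (P * H).trace.re ≤ (1/2) * traceNorm H := by
  rw [half_traceNorm_eq hH h0]
  exact trace_mul_hermitian_le hH hPp hP1

lemma exists_half_traceNorm {H : Mat n} (hH : H.IsHermitian) (h0 : H.trace = 0) :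
    ∃ P : Mat n, P.PosSemidef ∧ (1 - P).PosSemidef ∧ P * P = P ∧ Pᴴ = P ∧
      (P * H).trace.re = (1/2) * traceNorm H := by
  obtain ⟨P, h1, h2, h3, h4, h5⟩ := exists_pos_projector hH
  exact ⟨P, h1, h2, h3, h4, by rw [half_traceNorm_eq hH h0, h5]⟩

lemma main_posdef {ρ σ : Mat n} (hρ : ρ.PosDef) (hρ1 : ρ.trace = 1)
    (hσ : σ.PosSemidef) (hσ1 : σ.trace = 1) :
    (1/2) * traceNorm (ρ - σ) ≤ Real.sqrt (1 - ((ρ * σ).trace).re) := by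
  have hH : (ρ - σ).IsHermitian := hρ.isHermitian.sub hσ.1
  have h0 : (ρ - σ).trace = 0 := by rw [Matrix.trace_sub, hρ1, hσ1, sub_self]
  obtain ⟨P, hPp, hP1, hP2, hPh, hPeq⟩ := exists_half_traceNorm hH h0
  set a := (P * ρ).trace.re with hadef
  set b := (P * σ).trace.re with hbdef
  obtain ⟨ha0, ha1⟩ := density_bounds hρ.posSemidef hρ1 hPp hP1
  obtain ⟨hb0, hb1⟩ := density_bounds hσ hσ1 hPp hP1
  have hab : (1/2) * traceNorm (ρ - σ) = a - b := by
    rw [← hPeq, Matrix.mul_sub, Matrix.trace_sub, Complex.sub_re]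
  have e1 : ((1 - P) * ρ).trace.re = 1 - a := by
    rw [Matrix.sub_mul, one_mul, Matrix.trace_sub, Complex.sub_re, hρ1]
    simp [hadef]
  have e2 : ((1 - P) * σ).trace.re = 1 - b := by
    rw [Matrix.sub_mul, one_mul, Matrix.trace_sub, Complex.sub_re, hσ1]
    simp [hbdef]
  have hfid := fidelity_ineq hρ hσ hPh hP2
  rw [e1, e2] at hfid
  have ht0 : 0 ≤ (ρ * σ).trace.re := psd_mul_trace_re_nonneg hρ.posSemidef hσ
  have hmain : (ρ * σ).trace.re ≤ 1 - (b - a)^2 :=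
    classical_step hb0 hb1 ha0 ha1 ht0 hfid
  have habnn : 0 ≤ a - b := by
    rw [← hab]
    have := traceNorm_nonneg_herm hH
    linarith
  have hfin : a - b ≤ Real.sqrt (1 - (ρ * σ).trace.re) := by
    calc a - b = Real.sqrt ((a - b)^2) := (Real.sqrt_sq habnn).symm
      _ ≤ Real.sqrt (1 - (ρ * σ).trace.re) := by
          apply Real.sqrt_le_sqrt
          nlinarith [hmain]
  rw [hab]; exact hfin

lemma trace_mul_le_one {ρ σ : Mat n} (hρ : ρ.PosSemidef) (hρ1 : ρ.trace = 1)
    (hσ : σ.PosSemidef) (hσ1 : σ.trace = 1) : (ρ * σ).trace.re ≤ 1 := by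
  have h := trace_CS ρ σ
  rw [hρ.1, hσ.1] at h
  have hρ2 : (ρ * ρ).trace.re ≤ 1 := by
    have := psd_trace_sq_le hρ
    rw [hρ1] at this
    simpa using this
  have hσ2 : (σ * σ).trace.re ≤ 1 := by
    have := psd_trace_sq_le hσ
    rw [hσ1] at this
    simpa using this
  have h1 : Real.sqrt ((ρ * ρ).trace.re) ≤ 1 := by
    rw [show (1:ℝ) = Real.sqrt 1 by rw [Real.sqrt_one]]
    exact Real.sqrt_le_sqrt (by simpa using hρ2)
  have h2 : Real.sqrt ((σ * σ).trace.re) ≤ 1 := by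
    rw [show (1:ℝ) = Real.sqrt 1 by rw [Real.sqrt_one]]
    exact Real.sqrt_le_sqrt (by simpa using hσ2)
  calc (ρ * σ).trace.re ≤ Real.sqrt ((ρ * ρ).trace.re) * Real.sqrt ((σ * σ).trace.re) := h
    _ ≤ 1 * 1 := mul_le_mul h1 h2 (Real.sqrt_nonneg _) zero_le_one
    _ = 1 := one_mul 1

lemma smul_psd {c : ℝ} (hc : 0 ≤ c) {ρ : Mat n} (hρ : ρ.PosSemidef) :
    ((c : ℂ) • ρ).PosSemidef := by
  refine Matrix.PosSemidef.of_dotProduct_mulVec_nonneg ?_ ?_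
  · show ((c : ℂ) • ρ)ᴴ = _
    rw [Matrix.conjTranspose_smul, hρ.1]
    congr 1
    exact Complex.conj_ofReal c
  · intro x
    rw [Matrix.smul_mulVec, dotProduct_smul, smul_eq_mul]
    have h := hρ.dotProduct_mulVec_nonneg x
    obtain ⟨h1, h2⟩ := Complex.le_def.mp h
    refine Complex.le_def.mpr ⟨?_, ?_⟩
    · rw [Complex.re_ofReal_mul]
      simp only [Complex.zero_re] at h1 ⊢
      exact mul_nonneg hc h1
    · rw [Complex.im_ofReal_mul]
      simp only [Complex.zero_im] at h2 ⊢
      rw [← h2, mul_zero]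

lemma smul_one_posdef {c : ℝ} (hc : 0 < c) : ((c : ℂ) • (1 : Mat n)).PosDef := by
  refine Matrix.PosDef.of_dotProduct_mulVec_pos ?_ ?_
  · show ((c : ℂ) • (1 : Mat n))ᴴ = _
    rw [Matrix.conjTranspose_smul, Matrix.conjTranspose_one]
    congr 1
    exact Complex.conj_ofReal c
  · intro x hx
    rw [Matrix.smul_mulVec, Matrix.one_mulVec, dotProduct_smul, smul_eq_mul]
    have h := Matrix.dotProduct_star_self_pos_iff.mpr hx
    obtain ⟨h1, h2⟩ := Complex.lt_def.mp h
    refine Complex.lt_def.mpr ⟨?_, ?_⟩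
    · rw [Complex.re_ofReal_mul]
      simp only [Complex.zero_re] at h1 ⊢
      exact mul_pos hc h1
    · rw [Complex.im_ofReal_mul]
      simp only [Complex.zero_im] at h2 ⊢
      rw [← h2, mul_zero]

lemma main_general {ρ σ : Mat n} (hρ : IsDensity ρ) (hσ : IsDensity σ) :
    (1/2) * traceNorm (ρ - σ) ≤ Real.sqrt (1 - ((ρ * σ).trace).re) := by
  rcases Nat.eq_zero_or_pos n with hn | hn
  · exfalso
    have h1 := hρ.2
    subst hn
    simp [Matrix.trace] at h1
  have hn' : (n : ℂ) ≠ 0 := Nat.cast_ne_zero.mpr hn.ne'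
  have hnR : (0:ℝ) < n := by exact_mod_cast hn
  set t := ((ρ * σ).trace).re with htdef
  have ht1 : t ≤ 1 := trace_mul_le_one hρ.1 hρ.2 hσ.1 hσ.2
  refine le_of_forall_pos_le_add fun δ hδ => ?_
  set ε := min ((δ/4)^2) 1 with hεdef
  have hε0 : 0 < ε := lt_min (by positivity) one_pos
  have hε1 : ε ≤ 1 := min_le_right _ _
  have hsε : Real.sqrt ε ≤ δ/4 := by
    calc Real.sqrt ε ≤ Real.sqrt ((δ/4)^2) := Real.sqrt_le_sqrt (min_le_left _ _)
      _ = δ/4 := Real.sqrt_sq (by positivity)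
  have hεδ : ε ≤ δ/4 := by
    rcases le_or_gt (δ/4) 1 with h | h
    · have := min_le_left ((δ/4)^2) 1
      nlinarith
    · have := min_le_right ((δ/4)^2) 1
      linarith
  set ρε : Mat n := ((1 - ε : ℝ) : ℂ) • ρ + ((ε/n : ℝ) : ℂ) • 1 with hρεdef
  have hρεpd : ρε.PosDef := by
    exact Matrix.PosDef.posSemidef_add (smul_psd (by linarith) hρ.1)
      (smul_one_posdef (by positivity))
  have hρεtr : ρε.trace = 1 := by
    rw [hρεdef, Matrix.trace_add, Matrix.trace_smul, Matrix.trace_smul, Matrix.trace_one,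
      hρ.2, smul_eq_mul, smul_eq_mul, mul_one, Fintype.card_fin]
    push_cast
    field_simp
    ring
  have hρεσ : ((ρε * σ).trace).re = (1 - ε) * t + ε/n := by
    rw [hρεdef, Matrix.add_mul, Matrix.smul_mul, Matrix.smul_mul, one_mul,
      Matrix.trace_add, Matrix.trace_smul, Matrix.trace_smul, hσ.2, smul_eq_mul, smul_eq_mul,
      mul_one, Complex.add_re, Complex.re_ofReal_mul]
    simp [htdef]
  -- step 1 : triangle-type bound
  have hHσ : (ρ - σ).IsHermitian := hρ.1.1.sub hσ.1.1
  have h0σ : (ρ - σ).trace = 0 := by rw [Matrix.trace_sub, hρ.2, hσ.2, sub_self]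
  have hHεσ : (ρε - σ).IsHermitian := hρεpd.isHermitian.sub hσ.1.1
  have h0εσ : (ρε - σ).trace = 0 := by rw [Matrix.trace_sub, hρεtr, hσ.2, sub_self]
  have hdiff : ρ - ρε = ((ε : ℝ) : ℂ) • ρ - ((ε/n : ℝ) : ℂ) • 1 := by
    rw [hρεdef]
    push_cast
    module
  have step1 : (1/2) * traceNorm (ρ - σ) ≤ (1/2) * traceNorm (ρε - σ) + ε := by
    obtain ⟨P, hPp, hP1, _, _, hPeq⟩ := exists_half_traceNorm hHσ h0σ
    have hsplit : (P * (ρ - σ)).trace.re =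
        (P * (ρε - σ)).trace.re + (P * (ρ - ρε)).trace.re := by
      have : P * (ρ - σ) = P * (ρε - σ) + P * (ρ - ρε) := by
        rw [← Matrix.mul_add]
        congr 1
        abel
      rw [this, Matrix.trace_add, Complex.add_re]
    have hb1 : (P * (ρε - σ)).trace.re ≤ (1/2) * traceNorm (ρε - σ) :=
      trace_mul_le_half_traceNorm hHεσ h0εσ hPp hP1
    have hb2 : (P * (ρ - ρε)).trace.re ≤ ε := by
      rw [hdiff, Matrix.mul_sub, Matrix.mul_smul, Matrix.mul_smul, mul_one,
        Matrix.trace_sub, Matrix.trace_smul, Matrix.trace_smul, Complex.sub_re,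
        smul_eq_mul, smul_eq_mul, Complex.re_ofReal_mul, Complex.re_ofReal_mul]
      have hPρ := (density_bounds hρ.1 hρ.2 hPp hP1).2
      have hPtr : 0 ≤ P.trace.re := psd_trace_re_nonneg hPp
      have hεn : 0 ≤ ε/n := by positivity
      nlinarith
    rw [← hPeq, hsplit]
    exact add_le_add hb1 hb2
  -- step 2: main bound for ρε
  have step2 : (1/2) * traceNorm (ρε - σ) ≤ Real.sqrt (1 - ((ρε * σ).trace).re) :=
    main_posdef hρεpd hρεtr hσ.1 hσ.2
  -- step 3
  have step3 : Real.sqrt (1 - ((ρε * σ).trace).re) ≤ Real.sqrt (1 - t + ε) := by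
    apply Real.sqrt_le_sqrt
    rw [hρεσ]
    have h1n : 0 ≤ ε/n := by positivity
    nlinarith
  have step4 : Real.sqrt (1 - t + ε) ≤ Real.sqrt (1 - t) + Real.sqrt ε := by
    have h1t : 0 ≤ 1 - t := by linarith
    have hsq : (1 - t + ε) ≤ (Real.sqrt (1-t) + Real.sqrt ε)^2 := by
      have e1 := Real.sq_sqrt h1t
      have e2 := Real.sq_sqrt hε0.le
      nlinarith [Real.sqrt_nonneg (1-t), Real.sqrt_nonneg ε]
    calc Real.sqrt (1 - t + ε) ≤ Real.sqrt ((Real.sqrt (1-t) + Real.sqrt ε)^2) :=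
          Real.sqrt_le_sqrt hsq
      _ = _ := Real.sqrt_sq (by positivity)
  calc (1/2) * traceNorm (ρ - σ) ≤ (1/2) * traceNorm (ρε - σ) + ε := step1
    _ ≤ Real.sqrt (1 - ((ρε * σ).trace).re) + ε := by linarith
    _ ≤ Real.sqrt (1 - t + ε) + ε := by linarith
    _ ≤ Real.sqrt (1 - t) + Real.sqrt ε + ε := by linarith
    _ ≤ Real.sqrt (1 - t) + δ := by linarith

end FvG


/-- for density matrices `ρ, σ`, `(1/2)‖ρ − σ‖₁ ≤ √(1 − tr(ρσ))`. -/
theorem half_traceNorm_le_sqrt_one_sub_trace_mul {n : ℕ}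
    (ρ σ : Matrix (Fin n) (Fin n) ℂ) (hρ : IsDensity ρ) (hσ : IsDensity σ) :
    (1 / 2) * traceNorm (ρ - σ) ≤ Real.sqrt (1 - ((ρ * σ).trace).re) :=
  FvG.main_general hρ hσ
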